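/- arXiv:0903.4527 — 2 statements merged into one kernel-verified Lean document; each statement's English description precedes it below -/
import Mathlib

section
/- Fix a distinguished node 1 ∈ V. With beliefs as in the context, Σ_{x : V → {±1}} x_1 ∏_{ij∈E} ( b_ij(x_i,x_j) / (b_i(x_i) b_j(x_j)) ) ∏_{i∈V} b_i(x_i) = √(b_1(1) b_1(−1)) · Σ_{s ⊆ E} ∏_{ij∈s} β_ij ∏_{i∈V∖{1}} f_{d_i(s)}(γ_i) · g_{d_1(s)}(γ_1). (This is the loop series expansion of the marginal: the left-hand side equals (Z/Z_B)(p_1(+1) − p_1(−1)) for the true marginal p_1.) -/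
/-- The polynomials `f_n` defined by `f_0 = 1`, `f_1 = 0`,
`f_{n+1}(x) = x f_n(x) + f_{n-1}(x)`. -/
def chebF : ℕ → ℝ → ℝ
  | 0, _ => 1
  | 1, _ => 0
  | n + 2, x => x * chebF (n + 1) x + chebF n x

/-- The polynomials `g_n` defined by `g_0(x) = x`, `g_1(x) = -2`,
`g_{n+1}(x) = x g_n(x) + g_{n-1}(x)`. -/
def chebG : ℕ → ℝ → ℝ
  | 0, x => x
  | 1, _ => -2
  | n + 2, x => x * chebG (n + 1) x + chebG n x

/-- The spin `+1` or `-1` associated to a Boolean. -/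
def sgn (b : Bool) : ℤ := if b then 1 else -1

/-- `deg ep1 ep2 i s` is the number of edges in `s` incident to the node `i`. -/
def deg {V E : Type} [DecidableEq V] [DecidableEq E] (ep1 ep2 : E → V) (i : V)
    (s : Finset E) : ℕ :=
  (s.filter fun e => ep1 e = i ∨ ep2 e = i).card

lemma chebF_moment (p q : ℝ) (hp : 0 < p) (hq : 0 < q) (hpq : p + q = 1) (n : ℕ) :
    p * (-q / Real.sqrt (p * q)) ^ n + q * (p / Real.sqrt (p * q)) ^ n
      = chebF n ((p - q) / Real.sqrt (p * q)) := by
  have hc : 0 < Real.sqrt (p * q) := Real.sqrt_pos.2 (mul_pos hp hq)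
  have hc2 : Real.sqrt (p * q) * Real.sqrt (p * q) = p * q :=
    Real.mul_self_sqrt (le_of_lt (mul_pos hp hq))
  set c := Real.sqrt (p * q) with hcdef
  have h1 : (-q / c) ^ 2 = (p - q) / c * (-q / c) + 1 := by
    field_simp; linear_combination (-1 : ℝ) * hc2
  have h2 : (p / c) ^ 2 = (p - q) / c * (p / c) + 1 := by
    field_simp; linear_combination (-1 : ℝ) * hc2
  induction n using Nat.strongRecOn with
  | ind n ih =>
    match n with
    | 0 => simp [chebF]; linarith
    | 1 => simp only [pow_one, chebF]; field_simp; ring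
    | (n + 2) =>
      have e1 : (-q / c) ^ (n + 2) = (p - q) / c * (-q / c) ^ (n + 1) + (-q / c) ^ n := by
        have : (-q / c) ^ (n + 2) = (-q / c) ^ n * ((-q / c) ^ 2) := by ring
        rw [this, h1]; ring
      have e2 : (p / c) ^ (n + 2) = (p - q) / c * (p / c) ^ (n + 1) + (p / c) ^ n := by
        have : (p / c) ^ (n + 2) = (p / c) ^ n * ((p / c) ^ 2) := by ring
        rw [this, h2]; ring
      have A := ih (n + 1) (by omega)
      have B := ih n (by omega)
      show _ = chebF (n + 2) ((p - q) / c)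
      rw [chebF, ← A, ← B, e1, e2]; ring

lemma chebG_moment (p q : ℝ) (hp : 0 < p) (hq : 0 < q) (hpq : p + q = 1) (n : ℕ) :
    p * (-q / Real.sqrt (p * q)) ^ n - q * (p / Real.sqrt (p * q)) ^ n
      = Real.sqrt (p * q) * chebG n ((p - q) / Real.sqrt (p * q)) := by
  have hc : 0 < Real.sqrt (p * q) := Real.sqrt_pos.2 (mul_pos hp hq)
  have hc2 : Real.sqrt (p * q) * Real.sqrt (p * q) = p * q :=
    Real.mul_self_sqrt (le_of_lt (mul_pos hp hq))
  set c := Real.sqrt (p * q) with hcdef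
  have h1 : (-q / c) ^ 2 = (p - q) / c * (-q / c) + 1 := by
    field_simp; linear_combination (-1 : ℝ) * hc2
  have h2 : (p / c) ^ 2 = (p - q) / c * (p / c) + 1 := by
    field_simp; linear_combination (-1 : ℝ) * hc2
  induction n using Nat.strongRecOn with
  | ind n ih =>
    match n with
    | 0 => simp only [pow_zero, mul_one, chebG]; field_simp
    | 1 => simp only [pow_one, chebG]; field_simp; linear_combination (2 : ℝ) * hc2
    | (n + 2) =>
      have e1 : (-q / c) ^ (n + 2) = (p - q) / c * (-q / c) ^ (n + 1) + (-q / c) ^ n := by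
        have : (-q / c) ^ (n + 2) = (-q / c) ^ n * ((-q / c) ^ 2) := by ring
        rw [this, h1]; ring
      have e2 : (p / c) ^ (n + 2) = (p - q) / c * (p / c) ^ (n + 1) + (p / c) ^ n := by
        have : (p / c) ^ (n + 2) = (p / c) ^ n * ((p / c) ^ 2) := by ring
        rw [this, h2]; ring
      have A := ih (n + 1) (by omega)
      have B := ih n (by omega)
      have hcne : c ≠ 0 := ne_of_gt hc
      show _ = c * chebG (n + 2) ((p - q) / c)
      rw [chebG]
      calc p * (-q / c) ^ (n + 2) - q * (p / c) ^ (n + 2)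
          = (p - q) / c * (p * (-q / c) ^ (n + 1) - q * (p / c) ^ (n + 1))
              + (p * (-q / c) ^ n - q * (p / c) ^ n) := by rw [e1, e2]; ring
        _ = (p - q) / c * (c * chebG (n + 1) ((p - q) / c)) + c * chebG n ((p - q) / c) := by
              rw [A, B]
        _ = c * ((p - q) / c * chebG (n + 1) ((p - q) / c) + chebG n ((p - q) / c)) := by
              field_simp

lemma prod_endpoints {V E : Type} [Fintype V] [DecidableEq V] [DecidableEq E]
    (ep1 ep2 : E → V) (hloop : ∀ e, ep1 e ≠ ep2 e) (w : V → ℝ) (s : Finset E) :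
    ∏ e ∈ s, w (ep1 e) * w (ep2 e) = ∏ i : V, w i ^ deg ep1 ep2 i s := by
  classical
  induction s using Finset.induction_on with
  | empty => simp [deg]
  | insert e s he ih =>
    have hdeg : ∀ i, deg ep1 ep2 i (insert e s)
        = (if ep1 e = i ∨ ep2 e = i then 1 else 0) + deg ep1 ep2 i s := by
      intro i
      unfold deg
      rw [Finset.filter_insert]
      split
      · rw [Finset.card_insert_of_notMem (by simp [he])]; omega
      · simp
    rw [Finset.prod_insert he, ih]
    simp only [hdeg, pow_add]
    rw [Finset.prod_mul_distrib]
    congr 1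
    have h2 : ∀ i : V, w i ^ (if ep1 e = i ∨ ep2 e = i then 1 else 0)
        = if i ∈ ({ep1 e, ep2 e} : Finset V) then w i else 1 := by
      intro i
      have hiff : (i ∈ ({ep1 e, ep2 e} : Finset V)) = (ep1 e = i ∨ ep2 e = i) := by
        simp only [Finset.mem_insert, Finset.mem_singleton, eq_iff_iff]
        constructor <;> (rintro (h | h) <;> [exact Or.inl h.symm; exact Or.inr h.symm])
      simp only [hiff]
      split <;> simp
    simp only [h2]
    rw [Finset.prod_ite_mem, Finset.univ_inter, Finset.prod_pair (hloop e)]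

theorem stmt_6 {V E : Type} [Fintype V] [DecidableEq V] [Fintype E] [DecidableEq E]
    -- a finite simple graph, with edge endpoints `ep1 e`, `ep2 e`
    (ep1 ep2 : E → V)
    (hloop : ∀ e, ep1 e ≠ ep2 e)
    (hsimple : ∀ e e',
      (ep1 e = ep1 e' ∧ ep2 e = ep2 e') ∨ (ep1 e = ep2 e' ∧ ep2 e = ep1 e') → e = e')
    -- the distinguished node `1 ∈ V`
    (v1 : V)
    -- beliefs (spins: `true ↔ +1`, `false ↔ -1`)
    (b : V → Bool → ℝ) (hbpos : ∀ i x, 0 < b i x)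
    (hbnorm : ∀ i, b i true + b i false = 1)
    (bE : E → Bool → Bool → ℝ)
    (hmarg1 : ∀ e x1, ∑ x2 : Bool, bE e x1 x2 = b (ep1 e) x1)
    (hmarg2 : ∀ e x2, ∑ x1 : Bool, bE e x1 x2 = b (ep2 e) x2)
    -- the quantities `γ_i` and `β_ij`
    (γ : V → ℝ)
    (hγ : ∀ i, γ i = (b i true - b i false) / Real.sqrt (b i true * b i false))
    (β : E → ℝ)
    (hβ : ∀ e, β e =
      (bE e true true * bE e false false - bE e true false * bE e false true) /
        (Real.sqrt (b (ep1 e) true * b (ep1 e) false) *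
          Real.sqrt (b (ep2 e) true * b (ep2 e) false))) :
    ∑ x : V → Bool, (sgn (x v1) : ℝ) *
      (∏ e : E, bE e (x (ep1 e)) (x (ep2 e)) /
          (b (ep1 e) (x (ep1 e)) * b (ep2 e) (x (ep2 e)))) *
        ∏ i : V, b i (x i)
    = Real.sqrt (b v1 true * b v1 false) *
        ∑ s : Finset E, (∏ e ∈ s, β e) *
          (∏ i ∈ Finset.univ.erase v1, chebF (deg ep1 ep2 i s) (γ i)) *
          chebG (deg ep1 ep2 v1 s) (γ v1) := by
  classical
  set c : V → ℝ := fun i => Real.sqrt (b i true * b i false) with hcdef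
  have hcpos : ∀ i, 0 < c i := fun i => Real.sqrt_pos.2 (mul_pos (hbpos i true) (hbpos i false))
  have hcc : ∀ i, c i * c i = b i true * b i false :=
    fun i => Real.mul_self_sqrt (le_of_lt (mul_pos (hbpos i true) (hbpos i false)))
  set u : V → Bool → ℝ := fun i y => -((sgn y : ℤ) : ℝ) * b i (!y) / c i with hudef
  have hut : ∀ i, u i true = -(b i false) / c i := by intro i; simp [hudef, sgn]
  have huf : ∀ i, u i false = b i true / c i := by intro i; simp [hudef, sgn]
  -- moment identities
  have momF : ∀ i n, (∑ y : Bool, b i y * u i y ^ n) = chebF n (γ i) := by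
    intro i n
    have h := chebF_moment (b i true) (b i false) (hbpos i true) (hbpos i false) (hbnorm i) n
    rw [Fintype.sum_bool, hut, huf, hγ i]
    exact h
  have momG : ∀ i n, (∑ y : Bool, ((sgn y : ℤ) : ℝ) * (b i y * u i y ^ n))
      = c i * chebG n (γ i) := by
    intro i n
    have h := chebG_moment (b i true) (b i false) (hbpos i true) (hbpos i false) (hbnorm i) n
    rw [Fintype.sum_bool, hut, huf, hγ i]
    simp [sgn]
    linear_combination h
  have hcapp : ∀ i : V, Real.sqrt (b i true * b i false) = c i := fun i => rfl
  have key1 : ∀ i x, u i x / c i = -((sgn x : ℤ) : ℝ) / b i x := by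
    intro i x
    have hbx : b i x ≠ 0 := (hbpos i x).ne'
    have hbx' : b i (!x) ≠ 0 := (hbpos i (!x)).ne'
    have h1 : c i * c i = b i x * b i (!x) := by
      cases x
      · rw [hcc i]; simp [mul_comm]
      · rw [hcc i]; simp
    simp only [hudef]
    rw [div_div, h1]
    field_simp
  -- the edge factorization
  have hedge : ∀ e x1 x2, bE e x1 x2 / (b (ep1 e) x1 * b (ep2 e) x2)
      = β e * (u (ep1 e) x1 * u (ep2 e) x2) + 1 := by
    intro e x1 x2
    have hA : bE e true true + bE e true false = b (ep1 e) true := by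
      simpa [Fintype.sum_bool] using hmarg1 e true
    have hB : bE e false true + bE e false false = b (ep1 e) false := by
      simpa [Fintype.sum_bool] using hmarg1 e false
    have hC : bE e true true + bE e false true = b (ep2 e) true := by
      simpa [Fintype.sum_bool] using hmarg2 e true
    have hD : bE e true false + bE e false false = b (ep2 e) false := by
      simpa [Fintype.sum_bool] using hmarg2 e false
    have hn1 := hbnorm (ep1 e)
    have hn2 := hbnorm (ep2 e)
    have hdet : bE e true true * bE e false false - bE e true false * bE e false true
        = bE e true true - b (ep1 e) true * b (ep2 e) true := by
      linear_combination (bE e true true - b (ep2 e) true) * hA + bE e true true * hB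
        + bE e true true * hn1 - (bE e true true + bE e true false) * hC
    have hval : bE e x1 x2 =
        (bE e true true * bE e false false - bE e true false * bE e false true) *
          (((sgn x1 : ℤ) : ℝ) * ((sgn x2 : ℤ) : ℝ)) + b (ep1 e) x1 * b (ep2 e) x2 := by
      cases x1 <;> cases x2 <;> simp only [sgn] <;> norm_num
      · linear_combination hB - hC + b (ep2 e) true * hn1 - b (ep1 e) false * hn2 - hdet
      · linear_combination hdet + hC - b (ep2 e) true * hn1
      · linear_combination hdet + hA - b (ep1 e) true * hn2
      · linear_combination -hdet
    have hb1 : b (ep1 e) x1 ≠ 0 := (hbpos (ep1 e) x1).ne'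
    have hb2 : b (ep2 e) x2 ≠ 0 := (hbpos (ep2 e) x2).ne'
    rw [hβ e, hcapp, hcapp, hval]
    have h2 : (bE e true true * bE e false false - bE e true false * bE e false true) /
          (c (ep1 e) * c (ep2 e)) * (u (ep1 e) x1 * u (ep2 e) x2)
        = (bE e true true * bE e false false - bE e true false * bE e false true) *
            (((sgn x1 : ℤ) : ℝ) * ((sgn x2 : ℤ) : ℝ)) / (b (ep1 e) x1 * b (ep2 e) x2) := by
      calc (bE e true true * bE e false false - bE e true false * bE e false true) /
            (c (ep1 e) * c (ep2 e)) * (u (ep1 e) x1 * u (ep2 e) x2)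
          = (bE e true true * bE e false false - bE e true false * bE e false true) *
              ((u (ep1 e) x1 / c (ep1 e)) * (u (ep2 e) x2 / c (ep2 e))) := by ring
        _ = (bE e true true * bE e false false - bE e true false * bE e false true) *
              ((-((sgn x1 : ℤ) : ℝ) / b (ep1 e) x1) * (-((sgn x2 : ℤ) : ℝ) / b (ep2 e) x2)) := by
              rw [key1 (ep1 e) x1, key1 (ep2 e) x2]
        _ = _ := by ring
    rw [h2]
    field_simp
  -- now the main computation
  have key : ∀ x : V → Bool,
      (∏ e : E, bE e (x (ep1 e)) (x (ep2 e)) /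
          (b (ep1 e) (x (ep1 e)) * b (ep2 e) (x (ep2 e))))
      = ∑ t : Finset E, ∏ e ∈ t, (β e * (u (ep1 e) (x (ep1 e)) * u (ep2 e) (x (ep2 e)))) := by
    intro x
    rw [Finset.prod_congr rfl (fun e _ => hedge e (x (ep1 e)) (x (ep2 e)))]
    simpa using Fintype.prod_add
      (fun e => β e * (u (ep1 e) (x (ep1 e)) * u (ep2 e) (x (ep2 e)))) (fun _ => (1:ℝ))
  calc ∑ x : V → Bool, (sgn (x v1) : ℝ) *
      (∏ e : E, bE e (x (ep1 e)) (x (ep2 e)) /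
          (b (ep1 e) (x (ep1 e)) * b (ep2 e) (x (ep2 e)))) * ∏ i : V, b i (x i)
      = ∑ t : Finset E, ∑ x : V → Bool, (∏ e ∈ t, β e) *
          ∏ i : V, ((if i = v1 then ((sgn (x i) : ℤ) : ℝ) else 1) *
            (b i (x i) * u i (x i) ^ deg ep1 ep2 i t)) := by
        rw [Finset.sum_comm]
        refine Finset.sum_congr rfl fun x _ => ?_
        rw [key x, Finset.mul_sum, Finset.sum_mul]
        refine Finset.sum_congr rfl fun t _ => ?_
        have hsplit : ∏ i : V, ((if i = v1 then ((sgn (x i) : ℤ) : ℝ) else 1) *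
              (b i (x i) * u i (x i) ^ deg ep1 ep2 i t))
            = ((sgn (x v1) : ℤ) : ℝ) *
              ((∏ i : V, b i (x i)) * ∏ i : V, u i (x i) ^ deg ep1 ep2 i t) := by
          rw [Finset.prod_mul_distrib,
            Finset.prod_ite_eq' Finset.univ v1 (fun i => ((sgn (x i) : ℤ) : ℝ)),
            if_pos (Finset.mem_univ v1), Finset.prod_mul_distrib]
        rw [hsplit, Finset.prod_mul_distrib,
          prod_endpoints ep1 ep2 hloop (fun i => u i (x i)) t]
        ring
    _ = ∑ t : Finset E, (∏ e ∈ t, β e) *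
          ((c v1 * chebG (deg ep1 ep2 v1 t) (γ v1)) *
            ∏ i ∈ Finset.univ.erase v1, chebF (deg ep1 ep2 i t) (γ i)) := by
        refine Finset.sum_congr rfl fun t _ => ?_
        rw [← Finset.mul_sum]
        congr 1
        rw [← Fintype.prod_sum (fun i y => (if i = v1 then ((sgn y : ℤ) : ℝ) else 1) *
          (b i y * u i y ^ deg ep1 ep2 i t))]
        rw [← Finset.mul_prod_erase Finset.univ _ (Finset.mem_univ v1)]
        congr 1
        · simp only [eq_self_iff_true, if_true]
          exact momG v1 _
        · refine Finset.prod_congr rfl fun i hi => ?_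
          have hne : i ≠ v1 := Finset.ne_of_mem_erase hi
          simp only [if_neg hne, one_mul]
          exact momF i _
    _ = c v1 * ∑ s : Finset E, (∏ e ∈ s, β e) *
          (∏ i ∈ Finset.univ.erase v1, chebF (deg ep1 ep2 i s) (γ i)) *
          chebG (deg ep1 ep2 v1 s) (γ v1) := by
        rw [Finset.mul_sum]
        exact Finset.sum_congr rfl fun t _ => by ring
end

section
/- Suppose G is a finite connected simple graph with |E| = |V| (so G has exactly one cycle) and the distinguished node 1 lies on the unique cycle. Let {γ_i}_{i∈V} be arbitrary reals and {β_ij}_{ij∈E} reals with |β_ij| ≤ 1 for all ij ∈ E. Then γ_1 · ( Σ_{s ⊆ E} ∏_{ij∈s} β_ij ∏_{i∈V∖{1}} f_{d_i(s)}(γ_i) · g_{d_1(s)}(γ_1) ) ≥ 0; that is, the marginal-expansion sum has the same (weak) sign as γ_1, so the maximum-belief assignment at node 1 agrees with the maximum true marginal assignment for single-cycle graphs. -/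
set_option linter.unusedSectionVars false
open Finset Module


section LA
variable {V E : Type} [Fintype V] [DecidableEq V] [Fintype E] [DecidableEq E]

/-- boundary map over GF(2) -/
noncomputable def bdry (ep1 ep2 : E → V) : (E → ZMod 2) →ₗ[ZMod 2] (V → ZMod 2) where
  toFun x := fun i => ∑ e, x e * ((if ep1 e = i then 1 else 0) + (if ep2 e = i then 1 else 0))
  map_add' x y := by
    funext i
    simp [add_mul, Finset.sum_add_distrib]
  map_smul' c x := by
    funext i
    simp [Finset.mul_sum, mul_assoc]

noncomputable def sumV : (V → ZMod 2) →ₗ[ZMod 2] ZMod 2 where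
  toFun f := ∑ i, f i
  map_add' x y := by simp [Finset.sum_add_distrib]
  map_smul' c x := by simp [Finset.mul_sum]

def chi (s : Finset E) : E → ZMod 2 := fun e => if e ∈ s then 1 else 0

lemma bdry_chi (ep1 ep2 : E → V) (hloop : ∀ e, ep1 e ≠ ep2 e) (s : Finset E) (i : V) :
    bdry ep1 ep2 (chi s) i = (deg ep1 ep2 i s : ZMod 2) := by
  simp only [bdry, LinearMap.coe_mk, AddHom.coe_mk, chi]
  have step : ∀ e : E, (if e ∈ s then (1:ZMod 2) else 0) *
      ((if ep1 e = i then 1 else 0) + (if ep2 e = i then 1 else 0)) =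
      if e ∈ s then ((if ep1 e = i then (1:ZMod 2) else 0) + (if ep2 e = i then 1 else 0))
      else 0 := by
    intro e; by_cases h : e ∈ s <;> simp [h]
  rw [Finset.sum_congr rfl fun e _ => step e]
  rw [← Finset.sum_filter, Finset.filter_mem_eq_inter, Finset.univ_inter,
    Finset.sum_add_distrib, Finset.sum_boole, Finset.sum_boole]
  have hdisj : Disjoint (s.filter fun e => ep1 e = i) (s.filter fun e => ep2 e = i) := by
    rw [Finset.disjoint_filter]
    intro e _ h1 h2
    exact hloop e (h1.trans h2.symm)
  rw [deg, Finset.filter_or, Finset.card_union_of_disjoint hdisj]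
  push_cast
  ring

lemma sumV_bdry (ep1 ep2 : E → V) (x : E → ZMod 2) : sumV (bdry ep1 ep2 x) = 0 := by
  simp only [sumV, bdry, LinearMap.coe_mk, AddHom.coe_mk]
  rw [Finset.sum_comm]
  have : ∀ e : E, ∑ i : V, x e * ((if ep1 e = i then 1 else 0) + (if ep2 e = i then 1 else 0))
      = 0 := by
    intro e
    rw [← Finset.mul_sum, Finset.sum_add_distrib]
    have h2 : (1 + 1 : ZMod 2) = 0 := by decide
    simp [Finset.sum_ite_eq, h2]
  rw [Finset.sum_congr rfl fun e _ => this e]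
  simp

/-- the indicator pair function -/
def delta (a b : V) : V → ZMod 2 :=
  fun i => (if a = i then 1 else 0) + (if b = i then 1 else 0)

lemma bdry_single (ep1 ep2 : E → V) (e : E) :
    bdry ep1 ep2 (chi {e}) = delta (ep1 e) (ep2 e) := by
  funext i
  simp only [bdry, chi, LinearMap.coe_mk, AddHom.coe_mk, delta, Finset.mem_singleton]
  rw [Finset.sum_eq_single e]
  · simp [eq_comm]
  · intro b _ hb; simp [hb]
  · simp

lemma delta_comm (a b : V) : delta a b = delta b a := by
  funext i; simp [delta, add_comm]

lemma delta_add (a b c : V) : delta a b + delta b c = delta a c := by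
  funext i
  simp only [delta, Pi.add_apply]
  by_cases ha : a = i <;> by_cases hb : b = i <;> by_cases hc : c = i <;>
    simp [ha, hb, hc] <;> decide

lemma delta_mem (ep1 ep2 : E → V)
    (hconn : (SimpleGraph.fromRel fun a b => ∃ e, ep1 e = a ∧ ep2 e = b).Connected)
    (a b : V) : delta a b ∈ LinearMap.range (bdry ep1 ep2) := by
  have hself : ∀ c : V, delta c c = 0 := by
    intro c; funext i; simp only [delta]
    by_cases h : c = i <;> simp [h] <;> decide
  obtain ⟨wk⟩ := hconn.preconnected a b
  induction wk with
  | nil =>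
    rw [hself]; exact Submodule.zero_mem _
  | @cons u v w h p ih =>
    have huv : delta u v ∈ LinearMap.range (bdry ep1 ep2) := by
      rw [SimpleGraph.fromRel_adj] at h
      obtain ⟨hne, he⟩ := h
      rcases he with ⟨e, h1, h2⟩ | ⟨e, h1, h2⟩
      · exact ⟨chi {e}, by rw [bdry_single, h1, h2]⟩
      · exact ⟨chi {e}, by rw [bdry_single, h1, h2, delta_comm]⟩
    have := Submodule.add_mem _ huv ih
    rwa [delta_add] at this

lemma zmod2_cases (x : ZMod 2) : x = 0 ∨ x = 1 := by revert x; decide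

lemma ker_sumV_le_range (ep1 ep2 : E → V)
    (hconn : (SimpleGraph.fromRel fun a b => ∃ e, ep1 e = a ∧ ep2 e = b).Connected)
    (f : V → ZMod 2) (hf : sumV f = 0) : f ∈ LinearMap.range (bdry ep1 ep2) := by
  generalize hn : (Finset.univ.filter fun i => f i ≠ 0).card = n
  induction n using Nat.strong_induction_on generalizing f with
  | _ n ih =>
  rcases Finset.eq_empty_or_nonempty (Finset.univ.filter fun i => f i ≠ 0) with hemp | ⟨a, ha⟩
  · have : f = 0 := by
      funext i
      by_contra hi
      exact Finset.notMem_empty i (hemp ▸ Finset.mem_filter.mpr ⟨Finset.mem_univ i, hi⟩)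
    rw [this]; exact Submodule.zero_mem _
  · have hfa : f a = 1 := by
      rcases zmod2_cases (f a) with h | h
      · exact absurd h (Finset.mem_filter.mp ha).2
      · exact h
    -- find another support element
    have hb : ∃ b ∈ Finset.univ.filter fun i => f i ≠ 0, b ≠ a := by
      by_contra hco
      push_neg at hco
      have hsub : (Finset.univ.filter fun i => f i ≠ 0) = {a} := by
        apply Finset.eq_singleton_iff_unique_mem.mpr
        exact ⟨ha, fun x hx => hco x hx⟩
      have : sumV f = 1 := by
        simp only [sumV, LinearMap.coe_mk, AddHom.coe_mk]
        rw [← Finset.sum_filter_ne_zero, hsub, Finset.sum_singleton, hfa]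
      rw [hf] at this
      exact one_ne_zero this.symm
    obtain ⟨b, hbmem, hba⟩ := hb
    have hfb : f b = 1 := by
      rcases zmod2_cases (f b) with h | h
      · exact absurd h (Finset.mem_filter.mp hbmem).2
      · exact h
    set g := f + delta a b with hg
    have hone : (1 : ZMod 2) + 1 = 0 := by decide
    have hsupp : (Finset.univ.filter fun i => g i ≠ 0)
        = (Finset.univ.filter fun i => f i ≠ 0) \ {a, b} := by
      ext i
      simp only [Finset.mem_filter, Finset.mem_univ, true_and, Finset.mem_sdiff,
        Finset.mem_insert, Finset.mem_singleton]
      constructor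
      · intro hi
        constructor
        · intro h0
          apply hi
          simp only [hg, Pi.add_apply, delta, h0]
          by_cases hia : a = i <;> by_cases hib : b = i <;>
            simp [hia, hib] at * <;> simp_all
        · rintro (rfl | rfl) <;> apply hi <;>
            simp [hg, delta, Pi.add_apply, hfa, hfb, hba, Ne.symm hba] <;> decide
      · rintro ⟨h1, h2⟩
        push_neg at h2
        simp [hg, delta, Pi.add_apply, Ne.symm h2.1, Ne.symm h2.2]
        exact h1
    have hsumg : sumV g = 0 := by
      have hd : sumV (delta a b) = 0 := by
        simp only [sumV, delta, LinearMap.coe_mk, AddHom.coe_mk]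
        rw [Finset.sum_add_distrib]
        simp [Finset.sum_ite_eq]
        decide
      rw [hg, map_add, hf, hd, add_zero]
    have hcard : (Finset.univ.filter fun i => g i ≠ 0).card < n := by
      rw [hsupp]
      have hab : ({a, b} : Finset V) ⊆ Finset.univ.filter fun i => f i ≠ 0 := by
        intro x hx
        rcases Finset.mem_insert.mp hx with rfl | hx
        · exact ha
        · rw [Finset.mem_singleton.mp hx]; exact hbmem
      have h2 : ({a, b} : Finset V).card = 2 := by
        rw [Finset.card_insert_of_notMem (by simp [Ne.symm hba]), Finset.card_singleton]
      rw [Finset.card_sdiff_of_subset hab, h2, hn]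
      have h3 : 2 ≤ (Finset.univ.filter fun i => f i ≠ 0).card := by
        calc 2 = ({a, b} : Finset V).card := h2.symm
        _ ≤ _ := Finset.card_le_card hab
      omega
    have hgr := ih _ hcard g hsumg rfl
    have hfeq : f = g + delta a b := by
      funext i
      simp only [hg, Pi.add_apply]
      rcases zmod2_cases (delta a b i) with h | h <;> rw [h] <;> ring_nf <;> simp <;> decide
    rw [hfeq]
    exact Submodule.add_mem _ hgr (delta_mem ep1 ep2 hconn a b)

lemma range_bdry_eq (ep1 ep2 : E → V)
    (hconn : (SimpleGraph.fromRel fun a b => ∃ e, ep1 e = a ∧ ep2 e = b).Connected) :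
    LinearMap.range (bdry ep1 ep2) = LinearMap.ker (sumV : (V → ZMod 2) →ₗ[ZMod 2] ZMod 2) := by
  apply le_antisymm
  · rintro _ ⟨x, rfl⟩
    exact LinearMap.mem_ker.mpr (sumV_bdry ep1 ep2 x)
  · intro f hf
    exact ker_sumV_le_range ep1 ep2 hconn f (LinearMap.mem_ker.mp hf)

lemma finrank_ker_sumV [Nonempty V] :
    finrank (ZMod 2) (LinearMap.ker (sumV : (V → ZMod 2) →ₗ[ZMod 2] ZMod 2))
      = Fintype.card V - 1 := by
  have hsurj : LinearMap.range (sumV : (V → ZMod 2) →ₗ[ZMod 2] ZMod 2) = ⊤ := by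
    rw [LinearMap.range_eq_top]
    intro c
    obtain ⟨v0⟩ := ‹Nonempty V›
    refine ⟨fun i => if i = v0 then c else 0, ?_⟩
    simp [sumV, Finset.sum_ite_eq']
  have := LinearMap.finrank_range_add_finrank_ker (sumV : (V → ZMod 2) →ₗ[ZMod 2] ZMod 2)
  rw [hsurj, finrank_top, Module.finrank_self, Module.finrank_pi] at this
  omega

lemma finrank_ker_bdry (ep1 ep2 : E → V)
    (hconn : (SimpleGraph.fromRel fun a b => ∃ e, ep1 e = a ∧ ep2 e = b).Connected)
    (hcard : Fintype.card E = Fintype.card V) :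
    finrank (ZMod 2) (LinearMap.ker (bdry ep1 ep2)) = 1 := by
  have : Nonempty V := hconn.nonempty
  have h1 := LinearMap.finrank_range_add_finrank_ker (bdry ep1 ep2)
  rw [range_bdry_eq ep1 ep2 hconn, finrank_ker_sumV, Module.finrank_pi, hcard] at h1
  have h2 : 0 < Fintype.card V := Fintype.card_pos
  omega

lemma chi_mem_ker (ep1 ep2 : E → V) (hloop : ∀ e, ep1 e ≠ ep2 e) (s : Finset E)
    (hse : ∀ i, (deg ep1 ep2 i s : ZMod 2) = 0) :
    chi s ∈ LinearMap.ker (bdry ep1 ep2) := by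
  rw [LinearMap.mem_ker]
  funext i
  rw [bdry_chi ep1 ep2 hloop s i, hse i]
  rfl

lemma chi_ne_zero (s : Finset E) (hs : s.Nonempty) : (chi s : E → ZMod 2) ≠ 0 := by
  obtain ⟨e, he⟩ := hs
  intro h
  have := congrFun h e
  simp [chi, he] at this

lemma even_unique (ep1 ep2 : E → V) (hloop : ∀ e, ep1 e ≠ ep2 e)
    (hconn : (SimpleGraph.fromRel fun a b => ∃ e, ep1 e = a ∧ ep2 e = b).Connected)
    (hcard : Fintype.card E = Fintype.card V)
    (s t : Finset E) (hs : s.Nonempty) (ht : t.Nonempty)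
    (hse : ∀ i, (deg ep1 ep2 i s : ZMod 2) = 0)
    (hte : ∀ i, (deg ep1 ep2 i t : ZMod 2) = 0) : s = t := by
  have hks := chi_mem_ker ep1 ep2 hloop s hse
  have hkt := chi_mem_ker ep1 ep2 hloop t hte
  have hrank := finrank_ker_bdry ep1 ep2 hconn hcard
  have hspan : Submodule.span (ZMod 2) {(chi s : E → ZMod 2)}
      = LinearMap.ker (bdry ep1 ep2) := by
    apply Submodule.eq_of_le_of_finrank_le
    · rw [Submodule.span_le, Set.singleton_subset_iff]; exact hks
    · rw [hrank, finrank_span_singleton (chi_ne_zero s hs)]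
  have : (chi t : E → ZMod 2) ∈ Submodule.span (ZMod 2) {(chi s : E → ZMod 2)} := by
    rw [hspan]; exact hkt
  obtain ⟨c, hc⟩ := Submodule.mem_span_singleton.mp this
  have hceq : chi t = chi s := by
    rcases zmod2_cases c with rfl | rfl
    · exfalso; rw [zero_smul] at hc; exact chi_ne_zero t ht hc.symm
    · rw [one_smul] at hc; exact hc.symm
  ext e
  have := congrFun hceq e
  simp only [chi] at this
  by_cases hes : e ∈ s <;> by_cases het : e ∈ t
  · simp [hes, het]
  · rw [if_neg het, if_pos hes] at this; exact absurd this.symm one_ne_zero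
  · rw [if_pos het, if_neg hes] at this; exact absurd this one_ne_zero
  · simp [hes, het]

noncomputable def extMap (s : Finset E) : ((↥s : Type) → ZMod 2) →ₗ[ZMod 2] (E → ZMod 2) where
  toFun x := fun e => if h : e ∈ s then x ⟨e, h⟩ else 0
  map_add' x y := by funext e; by_cases h : e ∈ s <;> simp [h]
  map_smul' c x := by funext e; by_cases h : e ∈ s <;> simp [h]

lemma extMap_injective (s : Finset E) : Function.Injective (extMap s) := by
  intro x y h
  funext ⟨e, he⟩
  have := congrFun h e
  simpa [extMap, he] using this

noncomputable def restrW (W : Finset V) : (V → ZMod 2) →ₗ[ZMod 2] ((↥W : Type) → ZMod 2) where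
  toFun f := fun i => f i
  map_add' x y := rfl
  map_smul' c x := rfl

lemma bdry_ext_vanish (ep1 ep2 : E → V) (s : Finset E) (x : (↥s : Type) → ZMod 2)
    (i : V) (hi : i ∉ s.image ep1 ∪ s.image ep2) :
    bdry ep1 ep2 (extMap s x) i = 0 := by
  simp only [bdry, LinearMap.coe_mk, AddHom.coe_mk]
  apply Finset.sum_eq_zero
  intro e _
  by_cases hes : e ∈ s
  · have h1 : ep1 e ≠ i := by
      intro h; exact hi (Finset.mem_union_left _ (h ▸ Finset.mem_image_of_mem ep1 hes))
    have h2 : ep2 e ≠ i := by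
      intro h; exact hi (Finset.mem_union_right _ (h ▸ Finset.mem_image_of_mem ep2 hes))
    simp [h1, h2]
  · simp [extMap, hes]

lemma counting_main (ep1 ep2 : E → V) (hloop : ∀ e, ep1 e ≠ ep2 e)
    (hconn : (SimpleGraph.fromRel fun a b => ∃ e, ep1 e = a ∧ ep2 e = b).Connected)
    (hcard : Fintype.card E = Fintype.card V)
    (s : Finset E) (hs : s.Nonempty) :
    s.card ≤ (s.image ep1 ∪ s.image ep2).card ∧
    ((s.image ep1 ∪ s.image ep2).card ≤ s.card →
      ∃ t, t ⊆ s ∧ t.Nonempty ∧ ∀ i, (deg ep1 ep2 i t : ZMod 2) = 0) := by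
  set W := s.image ep1 ∪ s.image ep2 with hW
  have hWne : W.Nonempty := by
    obtain ⟨e, he⟩ := hs
    exact ⟨ep1 e, Finset.mem_union_left _ (Finset.mem_image_of_mem _ he)⟩
  haveI : Nonempty (↥W : Type) := ⟨⟨hWne.choose, hWne.choose_spec⟩⟩
  set ds : ((↥s : Type) → ZMod 2) →ₗ[ZMod 2] ((↥W : Type) → ZMod 2) :=
    (restrW W).comp ((bdry ep1 ep2).comp (extMap s)) with hds
  have hrange : LinearMap.range ds ≤
      LinearMap.ker (sumV : ((↥W : Type) → ZMod 2) →ₗ[ZMod 2] ZMod 2) := by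
    rintro _ ⟨x, rfl⟩
    rw [LinearMap.mem_ker]
    have heq : sumV (ds x) = sumV (bdry ep1 ep2 (extMap s x)) := by
      simp only [sumV, hds, restrW, LinearMap.coe_mk, AddHom.coe_mk, LinearMap.comp_apply]
      rw [Finset.sum_coe_sort W (fun i => bdry ep1 ep2 (extMap s x) i)]
      apply Finset.sum_subset (Finset.subset_univ W)
      intro i _ hiW
      exact bdry_ext_vanish ep1 ep2 s x i hiW
    rw [heq, sumV_bdry]
  have hkermem : ∀ x ∈ LinearMap.ker ds, extMap s x ∈ LinearMap.ker (bdry ep1 ep2) := by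
    intro x hx
    rw [LinearMap.mem_ker] at hx ⊢
    funext i
    by_cases hi : i ∈ W
    · have := congrFun hx ⟨i, hi⟩
      simpa [hds, restrW] using this
    · exact bdry_ext_vanish ep1 ep2 s x i hi
  have hinj : Function.Injective ((extMap s).restrict hkermem) := by
    intro x y h
    apply Subtype.ext
    apply extMap_injective s
    exact congrArg Subtype.val h
  have h1 : finrank (ZMod 2) (LinearMap.ker ds) ≤ 1 := by
    rw [← finrank_ker_bdry ep1 ep2 hconn hcard]
    exact LinearMap.finrank_le_finrank_of_injective hinj
  have h2 := LinearMap.finrank_range_add_finrank_ker ds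
  rw [Module.finrank_pi, Fintype.card_coe] at h2
  have h3 : finrank (ZMod 2) (LinearMap.range ds) ≤ W.card - 1 := by
    have := Submodule.finrank_mono hrange
    rwa [finrank_ker_sumV, Fintype.card_coe] at this
  have hWpos : 0 < W.card := Finset.card_pos.mpr hWne
  constructor
  · omega
  · intro hle
    have hk1 : 1 ≤ finrank (ZMod 2) (LinearMap.ker ds) := by omega
    have hne : LinearMap.ker ds ≠ ⊥ := by
      intro h
      rw [h, finrank_bot] at hk1
      omega
    obtain ⟨x, hxker, hx0⟩ := Submodule.exists_mem_ne_zero_of_ne_bot hne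
    refine ⟨s.filter (fun e => (extMap s x) e ≠ 0), Finset.filter_subset _ _, ?_, ?_⟩
    · obtain ⟨a, ha⟩ : ∃ a : (↥s : Type), x a ≠ 0 := by
        by_contra hco
        push_neg at hco
        exact hx0 (funext hco)
      refine ⟨a.val, Finset.mem_filter.mpr ⟨a.2, ?_⟩⟩
      simp only [extMap, LinearMap.coe_mk, AddHom.coe_mk]
      rw [dif_pos a.2]
      exact ha
    · have hchi : chi (s.filter (fun e => (extMap s x) e ≠ 0)) = extMap s x := by
        funext e
        simp only [chi, Finset.mem_filter]
        by_cases hes : e ∈ s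
        · rcases zmod2_cases (extMap s x e) with h0 | h1
          · simp [hes, h0]
          · simp [hes, h1]
        · have : extMap s x e = 0 := by simp [extMap, hes]
          simp [hes, this]
      intro i
      rw [← bdry_chi ep1 ep2 hloop _ i, hchi]
      have := hkermem x hxker
      rw [LinearMap.mem_ker] at this
      exact congrFun this i

lemma deg_split (ep1 ep2 : E → V) (hloop : ∀ e, ep1 e ≠ ep2 e) (i : V) (s : Finset E) :
    deg ep1 ep2 i s = (s.filter fun e => ep1 e = i).card + (s.filter fun e => ep2 e = i).card := by
  have hdisj : Disjoint (s.filter fun e => ep1 e = i) (s.filter fun e => ep2 e = i) := by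
    rw [Finset.disjoint_filter]
    intro e _ h1 h2
    exact hloop e (h1.trans h2.symm)
  rw [deg, Finset.filter_or, Finset.card_union_of_disjoint hdisj]

lemma sum_deg (ep1 ep2 : E → V) (hloop : ∀ e, ep1 e ≠ ep2 e) (s : Finset E) :
    ∑ i : V, deg ep1 ep2 i s = 2 * s.card := by
  rw [Finset.sum_congr rfl fun i _ => deg_split ep1 ep2 hloop i s, Finset.sum_add_distrib]
  rw [← Finset.card_eq_sum_card_fiberwise (fun e (_ : e ∈ s) => Finset.mem_univ (ep1 e)),
    ← Finset.card_eq_sum_card_fiberwise (fun e (_ : e ∈ s) => Finset.mem_univ (ep2 e))]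
  ring

lemma mem_W_iff (ep1 ep2 : E → V) (i : V) (s : Finset E) :
    i ∈ s.image ep1 ∪ s.image ep2 ↔ 0 < deg ep1 ep2 i s := by
  rw [deg, Finset.card_pos]
  constructor
  · intro h
    rcases Finset.mem_union.mp h with h | h <;> obtain ⟨e, he, hei⟩ := Finset.mem_image.mp h
    · exact ⟨e, Finset.mem_filter.mpr ⟨he, Or.inl hei⟩⟩
    · exact ⟨e, Finset.mem_filter.mpr ⟨he, Or.inr hei⟩⟩
  · rintro ⟨e, he⟩
    obtain ⟨hes, hei⟩ := Finset.mem_filter.mp he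
    rcases hei with h | h
    · exact Finset.mem_union_left _ (Finset.mem_image.mpr ⟨e, hes, h⟩)
    · exact Finset.mem_union_right _ (Finset.mem_image.mpr ⟨e, hes, h⟩)

lemma deg_mono (ep1 ep2 : E → V) (i : V) {t s : Finset E} (h : t ⊆ s) :
    deg ep1 ep2 i t ≤ deg ep1 ep2 i s :=
  Finset.card_le_card (Finset.filter_subset_filter _ h)

lemma deg_zero_off_W (ep1 ep2 : E → V) (i : V) (s : Finset E)
    (h : i ∉ s.image ep1 ∪ s.image ep2) : deg ep1 ep2 i s = 0 := by
  by_contra hc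
  exact h ((mem_W_iff ep1 ep2 i s).mpr (Nat.pos_of_ne_zero hc))

/-- Main structure lemma: a nonempty edge set all of whose degrees away from `v1`
are `≠ 1` has all degrees `0` or `2`, and degree `2` at `v1`. -/
lemma gen_loop_structure (ep1 ep2 : E → V) (hloop : ∀ e, ep1 e ≠ ep2 e)
    (hconn : (SimpleGraph.fromRel fun a b => ∃ e, ep1 e = a ∧ ep2 e = b).Connected)
    (hcard : Fintype.card E = Fintype.card V)
    (v1 : V)
    (hv1 : ∀ C : Finset E, C.Nonempty → (∀ i : V, deg ep1 ep2 i C ≠ 1) →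
      0 < deg ep1 ep2 v1 C)
    (s : Finset E) (hs : s.Nonempty)
    (hdeg : ∀ i, i ≠ v1 → deg ep1 ep2 i s ≠ 1) :
    (∀ i, deg ep1 ep2 i s = 0 ∨ deg ep1 ep2 i s = 2) ∧ deg ep1 ep2 v1 s = 2 := by
  set W := s.image ep1 ∪ s.image ep2 with hW
  obtain ⟨hU, hC'⟩ := counting_main ep1 ep2 hloop hconn hcard s hs
  rw [← hW] at hU hC'
  have hsum : ∑ i ∈ W, deg ep1 ep2 i s = 2 * s.card := by
    rw [← sum_deg ep1 ep2 hloop s]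
    apply Finset.sum_subset (Finset.subset_univ W)
    intro i _ hiW
    exact deg_zero_off_W ep1 ep2 i s hiW
  -- every vertex in W except possibly v1 has degree ≥ 2
  have hlb : ∀ i ∈ W, i ≠ v1 → 2 ≤ deg ep1 ep2 i s := by
    intro i hi hne
    have h1 := (mem_W_iff ep1 ep2 i s).mp hi
    have h2 := hdeg i hne
    omega
  -- first, crude bound gives |s| = |W| modulo the v1 term, enough for C'
  have hge : W.card ≤ s.card := by
    have hbound : 2 * W.card ≤ 2 * s.card + 1 := by
      rw [← hsum]
      by_cases hv1W : v1 ∈ W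
      · rw [← Finset.add_sum_erase _ _ hv1W]
        have e1 : 1 ≤ deg ep1 ep2 v1 s := (mem_W_iff ep1 ep2 v1 s).mp hv1W
        have e2 : (W.erase v1).card • 2 ≤ ∑ i ∈ W.erase v1, deg ep1 ep2 i s := by
          apply Finset.card_nsmul_le_sum
          intro i hi
          exact hlb i (Finset.mem_of_mem_erase hi) (Finset.ne_of_mem_erase hi)
        rw [smul_eq_mul] at e2
        rw [Finset.card_erase_of_mem hv1W] at e2
        have hWpos : 0 < W.card := Finset.card_pos.mpr ⟨v1, hv1W⟩
        omega
      · have e2 : W.card • 2 ≤ ∑ i ∈ W, deg ep1 ep2 i s := by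
          apply Finset.card_nsmul_le_sum
          intro i hi
          apply hlb i hi
          intro h
          exact hv1W (h ▸ hi)
        rw [smul_eq_mul] at e2
        omega
    omega
  -- apply C' to get an even subset, giving deg v1 s ≥ 2
  obtain ⟨t, hts, htne, hteven⟩ := hC' hge
  have htdeg : ∀ i, deg ep1 ep2 i t ≠ 1 := by
    intro i h1
    have := hteven i
    rw [h1] at this
    exact one_ne_zero this
  have htv1 := hv1 t htne htdeg
  have htv1' : 2 ≤ deg ep1 ep2 v1 t := by
    have := hteven v1
    rw [ZMod.natCast_eq_zero_iff] at this
    omega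
  have hv1s : 2 ≤ deg ep1 ep2 v1 s := le_trans htv1' (deg_mono ep1 ep2 v1 hts)
  -- now every vertex of W has degree ≥ 2
  have hlb2 : ∀ i ∈ W, 2 ≤ deg ep1 ep2 i s := by
    intro i hi
    by_cases hne : i = v1
    · exact hne ▸ hv1s
    · exact hlb i hi hne
  have hsge : 2 * W.card ≤ 2 * s.card := by
    rw [← hsum]
    have := Finset.card_nsmul_le_sum W (fun i => deg ep1 ep2 i s) 2 hlb2
    rw [smul_eq_mul] at this
    omega
  have hcardeq : s.card = W.card := by omega
  -- each degree in W is exactly 2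
  have hdeg2 : ∀ i ∈ W, deg ep1 ep2 i s = 2 := by
    intro j hj
    by_contra hc
    have h3 : 3 ≤ deg ep1 ep2 j s := by
      have := hlb2 j hj
      omega
    have : 2 * W.card + 1 ≤ ∑ i ∈ W, deg ep1 ep2 i s := by
      rw [← Finset.add_sum_erase _ _ hj]
      have e2 : (W.erase j).card • 2 ≤ ∑ i ∈ W.erase j, deg ep1 ep2 i s := by
        apply Finset.card_nsmul_le_sum
        intro i hi
        exact hlb2 i (Finset.mem_of_mem_erase hi)
      rw [smul_eq_mul, Finset.card_erase_of_mem hj] at e2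
      have hWpos : 0 < W.card := Finset.card_pos.mpr ⟨j, hj⟩
      omega
    rw [hsum] at this
    omega
  constructor
  · intro i
    by_cases hi : i ∈ W
    · exact Or.inr (hdeg2 i hi)
    · exact Or.inl (deg_zero_off_W ep1 ep2 i s hi)
  · apply hdeg2
    rw [hW, mem_W_iff]
    omega

end LA

lemma chebF_two (x : ℝ) : chebF 2 x = 1 := by
  show x * chebF 1 x + chebF 0 x = 1
  simp [chebF]

lemma chebG_two (x : ℝ) : chebG 2 x = -x := by
  show x * chebG 1 x + chebG 0 x = -x
  simp [chebG]; ring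


theorem stmt_7 {V E : Type} [Fintype V] [DecidableEq V] [Fintype E] [DecidableEq E]
    -- a finite connected simple graph with `|E| = |V|` (exactly one cycle)
    (ep1 ep2 : E → V)
    (hloop : ∀ e, ep1 e ≠ ep2 e)
    (hsimple : ∀ e e',
      (ep1 e = ep1 e' ∧ ep2 e = ep2 e') ∨ (ep1 e = ep2 e' ∧ ep2 e = ep1 e') → e = e')
    (hconn : (SimpleGraph.fromRel fun a b => ∃ e, ep1 e = a ∧ ep2 e = b).Connected)
    (hcard : Fintype.card E = Fintype.card V)
    -- the distinguished node `1` lies on the unique cycle: it is covered by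
    -- every nonempty generalized loop
    (v1 : V)
    (hv1 : ∀ C : Finset E, C.Nonempty → (∀ i : V, deg ep1 ep2 i C ≠ 1) →
      0 < deg ep1 ep2 v1 C)
    (γ : V → ℝ) (β : E → ℝ) (hβ : ∀ e, |β e| ≤ 1) :
    0 ≤ γ v1 *
      ∑ s : Finset E, (∏ e ∈ s, β e) *
        (∏ i ∈ Finset.univ.erase v1, chebF (deg ep1 ep2 i s) (γ i)) *
        chebG (deg ep1 ep2 v1 s) (γ v1) := by
  classical
  set F : Finset E → ℝ := fun s => (∏ e ∈ s, β e) *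
      (∏ i ∈ Finset.univ.erase v1, chebF (deg ep1 ep2 i s) (γ i)) *
      chebG (deg ep1 ep2 v1 s) (γ v1) with hF
  set P : Finset E → Prop := fun s => ∀ i, i ≠ v1 → deg ep1 ep2 i s ≠ 1 with hP
  have hzero : ∀ s : Finset E, F s ≠ 0 → P s := by
    intro s hFs i hi hdi
    apply hFs
    have h0 : chebF (deg ep1 ep2 i s) (γ i) = 0 := by rw [hdi]; rfl
    have hmem : i ∈ Finset.univ.erase v1 := Finset.mem_erase.mpr ⟨hi, Finset.mem_univ i⟩
    rw [hF]
    simp only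
    rw [Finset.prod_eq_zero hmem h0, mul_zero, zero_mul]
  have hsplit : ∑ s : Finset E, F s = ∑ s ∈ Finset.univ.filter P, F s :=
    (Finset.sum_filter_of_ne (fun s _ h => hzero s h)).symm
  have hdeg_empty : ∀ i : V, deg ep1 ep2 i (∅ : Finset E) = 0 := by
    intro i; simp [deg]
  have hFempty : F ∅ = γ v1 := by
    rw [hF]
    simp only [Finset.prod_empty, hdeg_empty]
    simp [chebG, chebF]
  have hPempty : (∅ : Finset E) ∈ Finset.univ.filter P := by
    simp [hP, hdeg_empty]
  -- structure of nonempty elements of the filter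
  have hstruct : ∀ s ∈ Finset.univ.filter P, s.Nonempty →
      (∀ i, deg ep1 ep2 i s = 0 ∨ deg ep1 ep2 i s = 2) ∧ deg ep1 ep2 v1 s = 2 := by
    intro s hsmem hsne
    exact gen_loop_structure ep1 ep2 hloop hconn hcard v1 hv1 s hsne
      (Finset.mem_filter.mp hsmem).2
  have huniq : ∀ s ∈ Finset.univ.filter P, ∀ t ∈ Finset.univ.filter P,
      s.Nonempty → t.Nonempty → s = t := by
    intro s hsmem t htmem hsne htne
    obtain ⟨hs02, _⟩ := hstruct s hsmem hsne
    obtain ⟨ht02, _⟩ := hstruct t htmem htne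
    apply even_unique ep1 ep2 hloop hconn hcard s t hsne htne
    · intro i; rcases hs02 i with h | h <;> rw [h] <;> decide
    · intro i; rcases ht02 i with h | h <;> rw [h] <;> decide
  have hprodβ : ∀ s : Finset E, ∏ e ∈ s, β e ≤ 1 := by
    intro s
    calc ∏ e ∈ s, β e ≤ |∏ e ∈ s, β e| := le_abs_self _
    _ = ∏ e ∈ s, |β e| := Finset.abs_prod s β
    _ ≤ 1 := Finset.prod_le_one (fun e _ => abs_nonneg _) (fun e _ => hβ e)
  rcases Finset.eq_empty_or_nonempty ((Finset.univ.filter P).erase ∅) with hcase | ⟨c, hc⟩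
  · have : Finset.univ.filter P = {∅} := by
      apply Finset.eq_singleton_iff_unique_mem.mpr
      refine ⟨hPempty, fun x hx => ?_⟩
      by_contra hne
      exact Finset.notMem_empty x (hcase ▸ Finset.mem_erase.mpr ⟨hne, hx⟩)
    rw [hsplit, this, Finset.sum_singleton, hFempty]
    exact mul_self_nonneg _
  · have hcne : c ≠ ∅ := (Finset.mem_erase.mp hc).1
    have hcmem : c ∈ Finset.univ.filter P := (Finset.mem_erase.mp hc).2
    have hcnonempty : c.Nonempty := Finset.nonempty_iff_ne_empty.mpr hcne
    have hfilter : Finset.univ.filter P = {∅, c} := by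
      ext x
      constructor
      · intro hx
        rcases Finset.eq_empty_or_nonempty x with rfl | hxne
        · exact Finset.mem_insert_self _ _
        · rw [huniq x hx c hcmem hxne hcnonempty]
          exact Finset.mem_insert.mpr (Or.inr (Finset.mem_singleton_self c))
      · intro hx
        rcases Finset.mem_insert.mp hx with rfl | hx
        · exact hPempty
        · rw [Finset.mem_singleton.mp hx]; exact hcmem
    obtain ⟨h02, hv12⟩ := hstruct c hcmem hcnonempty
    have hFc : F c = (∏ e ∈ c, β e) * (-(γ v1)) := by
      rw [hF]
      simp only
      have hmid : (∏ i ∈ Finset.univ.erase v1, chebF (deg ep1 ep2 i c) (γ i)) = 1 := by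
        apply Finset.prod_eq_one
        intro i _
        rcases h02 i with h | h <;> rw [h]
        · rfl
        · exact chebF_two (γ i)
      rw [hmid, hv12, chebG_two, mul_one]
    rw [hsplit, hfilter, Finset.sum_insert (fun h => hcne (Finset.mem_singleton.mp h).symm),
      Finset.sum_singleton, hFempty, hFc]
    have h1 : ∏ e ∈ c, β e ≤ 1 := hprodβ c
    have h2 : 0 ≤ γ v1 * γ v1 := mul_self_nonneg _
    nlinarith [mul_self_nonneg (γ v1)]
end
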